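/- Let Q=(V,E,s,t) be a finite quiver without cycles of length m, with starting set S and associated quiver Q'=(V',E',s',t'). Then every automorphism f ∈ Aut(Q) satisfies f(Path(Q')) = Path(Q'), and the restriction f|_{E'} is an automorphism of Q'. -/

import Mathlib

open scoped Classical

noncomputable section

variable {V E : Type*}

/-- A (positive-length) path in the quiver `(V, E, s, t)`: a nonempty list of arrows
in which consecutive arrows are composable, i.e. `t αᵢ = s αᵢ₊₁`. -/
def IsPath (s t : E → V) (l : List E) : Prop :=
  l ≠ [] ∧ l.Chain' (fun a b => t a = s b)

/-- The source of a (nonempty) list of arrows, as an `Option`. -/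
def src? (s : E → V) (l : List E) : Option V := l.head?.map s

/-- The target of a (nonempty) list of arrows, as an `Option`. -/
def tgt? (t : E → V) (l : List E) : Option V := l.getLast?.map t

/-- The quiver has no cycles: there is no path whose source equals its target. -/
def NoCycles (s t : E → V) : Prop :=
  ∀ l : List E, IsPath s t l → src? s l ≠ tgt? t l

/-- `m` is the maximum of the lengths of paths of the quiver (the length of the quiver). -/
def IsMaxPathLen (s t : E → V) (m : ℕ) : Prop :=
  (∃ l : List E, IsPath s t l ∧ l.length = m) ∧ ∀ l : List E, IsPath s t l → l.length ≤ m

/-- The set `Path(Q)` of all paths of length `≥ 1`, as a subtype of lists of arrows. -/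
abbrev PathQ (s t : E → V) := {l : List E // IsPath s t l}

/-- The underlying vector space of the Lie algebra `n_Q` obtained from the quiver:
the real vector space with basis `Path(Q)`. -/
abbrev nQ (s t : E → V) := PathQ s t →₀ ℝ

/-- The Lie bracket of two basis paths: `[x, y] = xy` if the concatenation `xy` is a path,
`[x, y] = -yx` if the concatenation `yx` is a path, and `[x, y] = 0` otherwise. -/
def braBasis (s t : E → V) (x y : PathQ s t) : nQ s t :=
  if h : IsPath s t (x.val ++ y.val) then Finsupp.single ⟨x.val ++ y.val, h⟩ 1
  else if h' : IsPath s t (y.val ++ x.val) then -Finsupp.single ⟨y.val ++ x.val, h'⟩ 1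
  else 0

/-- The Lie bracket of `n_Q`, extended bilinearly from basis paths. -/
def bra (s t : E → V) (u v : nQ s t) : nQ s t :=
  u.sum fun x cx => v.sum fun y cy => (cx * cy) • braBasis s t x y

/-- The span of all brackets of elements of two subspaces of `n_Q`. -/
def braSpan (s t : E → V) (M N : Submodule ℝ (nQ s t)) : Submodule ℝ (nQ s t) :=
  Submodule.span ℝ {z | ∃ u ∈ M, ∃ v ∈ N, z = bra s t u v}

/-- The starting set `S` of a quiver of length `m`: the set of arrows `a` such that
`a x` is a path of length `m` for some path `x`. -/
def startSet (s t : E → V) (m : ℕ) : Set E :=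
  {a | ∃ x : List E, IsPath s t x ∧ IsPath s t (a :: x) ∧ (a :: x).length = m}

/-- The arrow set `E' = (E ∖ S) ∪ {ab ∈ Path(Q) : a ∈ S, b ∈ E}` of the quiver `Q'`,
realized as a set of lists of arrows of `Q`. -/
def edgesQ' (s t : E → V) (m : ℕ) : Set (List E) :=
  {l | (∃ a : E, a ∉ startSet s t m ∧ l = [a]) ∨
       (∃ a b : E, a ∈ startSet s t m ∧ IsPath s t [a, b] ∧ l = [a, b])}

/-- `L` is a decomposition of the list `l` of arrows as a path of the quiver `Q'`:
a nonempty chain of consecutively composable `Q'`-arrows whose concatenation is `l`. -/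
def IsDecompQ' (s t : E → V) (m : ℕ) (L : List (List E)) (l : List E) : Prop :=
  L ≠ [] ∧ (∀ p ∈ L, p ∈ edgesQ' s t m) ∧
    L.Chain' (fun p q => tgt? t p = src? s q) ∧ L.flatten = l

/-- `l` underlies a path of the quiver `Q'`. -/
def IsPathQ' (s t : E → V) (m : ℕ) (l : List E) : Prop :=
  ∃ L : List (List E), IsDecompQ' s t m L l

/-- `f : E → E` is an automorphism of the quiver `(V, E, s, t)`. -/
def IsQuivAut (s t : E → V) (f : E → E) : Prop :=
  Function.Bijective f ∧ ∀ x y : E, (t x = s y ↔ t (f x) = s (f y))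

/-- `g` is an automorphism of the quiver whose arrow set is the set `ES` of lists of
arrows of `Q` (such as the quiver `Q'` with arrow set `edgesQ'`). -/
def IsQuivAutOn (s t : E → V) (ES : Set (List E)) (g : List E → List E) : Prop :=
  Set.BijOn g ES ES ∧
    ∀ p ∈ ES, ∀ q ∈ ES, (tgt? t p = src? s q ↔ tgt? t (g p) = src? s (g q))

/-- The subspace `n' = span Path(Q')` of `n_Q`. -/
def nQ'span (s t : E → V) (m : ℕ) : Submodule ℝ (nQ s t) :=
  Submodule.span ℝ {u | ∃ p : PathQ s t, IsPathQ' s t m p.val ∧ u = Finsupp.single p 1}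

section Aux
variable {V E : Type*}

lemma isPath_map {s t : E → V} {f : E → E} (hf : IsQuivAut s t f) {l : List E}
    (hl : IsPath s t l) : IsPath s t (l.map f) := by
  refine ⟨by simpa using hl.1, ?_⟩
  rw [List.Chain', List.isChain_map]
  exact hl.2.imp fun {a b} h => (hf.2 a b).mp h

lemma aut_inv {s t : E → V} {f : E → E} (hf : IsQuivAut s t f) :
    ∃ g : E → E, IsQuivAut s t g ∧ (∀ x, f (g x) = x) ∧ (∀ x, g (f x) = x) := by
  let e := Equiv.ofBijective f hf.1
  refine ⟨e.symm, ⟨e.symm.bijective, fun x y => ?_⟩, fun x => e.apply_symm_apply x,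
    fun x => e.symm_apply_apply x⟩
  have := hf.2 (e.symm x) (e.symm y)
  simp only [show ∀ z, f (e.symm z) = z from fun z => e.apply_symm_apply z] at this
  exact this.symm

lemma startSet_map {s t : E → V} {m : ℕ} {f : E → E} (hf : IsQuivAut s t f) {a : E}
    (ha : a ∈ startSet s t m) : f a ∈ startSet s t m := by
  obtain ⟨x, hx, hax, hlen⟩ := ha
  exact ⟨x.map f, isPath_map hf hx, by simpa using isPath_map hf hax, by simpa using hlen⟩

lemma startSet_map_iff {s t : E → V} {m : ℕ} {f : E → E} (hf : IsQuivAut s t f) (a : E) :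
    f a ∈ startSet s t m ↔ a ∈ startSet s t m := by
  obtain ⟨g, hg, hfg, hgf⟩ := aut_inv hf
  refine ⟨fun h => ?_, startSet_map hf⟩
  have := startSet_map hg h
  rwa [hgf] at this

lemma edgesQ'_map {s t : E → V} {m : ℕ} {f : E → E} (hf : IsQuivAut s t f) {l : List E}
    (hl : l ∈ edgesQ' s t m) : l.map f ∈ edgesQ' s t m := by
  rcases hl with ⟨a, ha, rfl⟩ | ⟨a, b, ha, hab, rfl⟩
  · exact Or.inl ⟨f a, fun h => ha ((startSet_map_iff hf a).mp h), rfl⟩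
  · exact Or.inr ⟨f a, f b, startSet_map hf ha, by simpa using isPath_map hf hab, rfl⟩

lemma tgt_src_map_iff {s t : E → V} {f : E → E} (hf : IsQuivAut s t f) {p q : List E}
    (hp : p ≠ []) (hq : q ≠ []) :
    (tgt? t p = src? s q ↔ tgt? t (p.map f) = src? s (q.map f)) := by
  rw [tgt?, tgt?, src?, src?, List.getLast?_eq_getLast hp,
    List.head?_eq_head hq,
    List.getLast?_eq_getLast (l := p.map f) (by simpa using hp),
    List.head?_eq_head (show q.map f ≠ [] by simpa using hq),
    List.getLast_map, List.head_map]
  simp only [Option.map_some]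
  rw [Option.some_inj, Option.some_inj]
  exact hf.2 _ _

lemma edgesQ'_ne_nil {s t : E → V} {m : ℕ} {l : List E} (hl : l ∈ edgesQ' s t m) :
    l ≠ [] := by
  rcases hl with ⟨a, _, rfl⟩ | ⟨a, b, _, _, rfl⟩ <;> simp

lemma tgt_src_map {s t : E → V} {f : E → E} (hf : IsQuivAut s t f) {p q : List E}
    (h : tgt? t p = src? s q) : tgt? t (p.map f) = src? s (q.map f) := by
  rcases eq_or_ne p [] with rfl | hp
  · have hq : q = [] := by
      by_contra hq
      rw [tgt?, src?, List.head?_eq_head hq] at h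
      simp at h
    subst hq; rfl
  · have hq : q ≠ [] := by
      rintro rfl
      rw [tgt?, src?, List.getLast?_eq_getLast hp] at h
      simp at h
    exact (tgt_src_map_iff hf hp hq).mp h

lemma isPathQ'_map {s t : E → V} {m : ℕ} {f : E → E} (hf : IsQuivAut s t f) {l : List E}
    (hl : IsPathQ' s t m l) : IsPathQ' s t m (l.map f) := by
  obtain ⟨L, hL0, hLe, hLc, hLf⟩ := hl
  refine ⟨L.map (List.map f), by simpa using hL0, ?_, ?_, ?_⟩
  · intro p hp
    simp only [List.mem_map] at hp
    obtain ⟨q, hq, rfl⟩ := hp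
    exact edgesQ'_map hf (hLe q hq)
  · rw [List.Chain', List.isChain_map]
    exact hLc.imp fun {p q} h => tgt_src_map hf h
  · rw [← hLf, List.map_flatten]

end Aux

/-- A single arrow, regarded as a path of length one. -/
def edgePath (s t : E → V) (a : E) : PathQ s t := ⟨[a], by
  refine ⟨by simp, ?_⟩
  first
  | exact List.chain'_singleton _
  | exact List.IsChain.singleton _
  | simp [List.Chain']
  | constructor⟩

/-- Every automorphism `f` of a finite quiver without cycles of
length `m` satisfies `f(Path(Q')) = Path(Q')`, and its restriction to the arrow set
`E'` of `Q'` is an automorphism of `Q'`. -/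
theorem aut_preserves_pathQ'_and_restricts [Finite V] [Finite E] (s t : E → V)
    (hQ : NoCycles s t) (m : ℕ) (hm : IsMaxPathLen s t m)
    (f : E → E) (hf : IsQuivAut s t f) :
    (List.map f '' {l : List E | IsPathQ' s t m l} = {l : List E | IsPathQ' s t m l}) ∧
    IsQuivAutOn s t (edgesQ' s t m) (List.map f) := by
  obtain ⟨g, hg, hfg, hgf⟩ := aut_inv hf
  have hmapfg : ∀ l : List E, (l.map g).map f = l := by
    intro l
    rw [List.map_map, show f ∘ g = id from funext hfg, List.map_id]
  constructor
  · ext l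
    simp only [Set.mem_image, Set.mem_setOf_eq]
    constructor
    · rintro ⟨x, hx, rfl⟩; exact isPathQ'_map hf hx
    · intro hl
      exact ⟨l.map g, isPathQ'_map hg hl, hmapfg l⟩
  · refine ⟨⟨fun p hp => edgesQ'_map hf hp, ?_, ?_⟩, ?_⟩
    · intro p _ q _ h
      exact List.map_injective_iff.mpr hf.1.injective h
    · intro p hp
      exact ⟨p.map g, edgesQ'_map hg hp, hmapfg p⟩
    · intro p hp q hq
      exact tgt_src_map_iff hf (edgesQ'_ne_nil hp) (edgesQ'_ne_nil hq)

end
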